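/- Let V and M be finite-dimensional real inner product spaces, and let L : V × M → M be a velocity map, linear in its first argument and jointly continuously differentiable. Let l : V → ℝ be continuously differentiable with gradient ∇l : V → V (defined via the inner product on V), and suppose there is a continuously differentiable map G : V → V such that ∇l(G(m)) = m for all m ∈ V. For (Q,P) ∈ M × M define m(Q,P) ∈ V by ⟪m(Q,P), w⟫ = ⟪P, L w Q⟫ for all w ∈ V, and define the Hamiltonian H(Q,P) = ⟪P, L (G(m(Q,P))) Q⟫ − l(G(m(Q,P))). Then, writing ξ* = G(m(Q,P)), the partial derivatives of H satisfy: for every δP ∈ M, the derivative of H in the P-direction δP equals ⟪δP, L ξ* Q⟫, and for every δQ ∈ M, the derivative of H in the Q-direction δQ equals ⟪P, (D(L ξ*)(Q))(δQ)⟫. Consequently the Clebsch equations Q′ = L ξ* Q and ⟪P′, v⟫ = −⟪P, (D(L ξ*)(Q))(v)⟫ are canonical Hamilton's equations for H. -/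

import Mathlib

open RealInnerProductSpace

/-- **Legendre transform lemma.** If the Lagrangian `l` can be inverted for
`ξ` via a map `G` applied to `δl/δξ` (i.e. `∇l (G m) = m`), then the Clebsch
equations for `Q` and `P` are canonical Hamilton's equations for
`H(Q,P) = ⟪P, L (G (m(Q,P))) Q⟫ − l (G (m(Q,P)))`, where the momentum
`m(Q,P)` is defined by `⟪m(Q,P), w⟫ = ⟪P, L w Q⟫`. -/
theorem clebsch_hamiltonian_legendre_transform
    {V M : Type*}
    [NormedAddCommGroup V] [InnerProductSpace ℝ V] [FiniteDimensional ℝ V]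
    [NormedAddCommGroup M] [InnerProductSpace ℝ M] [FiniteDimensional ℝ M]
    (L : V → M → M)
    (hLlin : ∀ Q : M, IsLinearMap ℝ (fun w : V => L w Q))
    (hLsmooth : ContDiff ℝ 1 (fun p : V × M => L p.1 p.2))
    (l : V → ℝ) (hl : ContDiff ℝ 1 l)
    (G : V → V) (hG : ContDiff ℝ 1 G)
    (hGrad : ∀ m : V, gradient l (G m) = m)
    (m : M → M → V)
    (hm : ∀ (Q P : M) (w : V), ⟪m Q P, w⟫ = ⟪P, L w Q⟫)
    (H : M → M → ℝ)
    (hH : ∀ Q P : M, H Q P = ⟪P, L (G (m Q P)) Q⟫ - l (G (m Q P))) :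
    ∀ Q P : M,
      HasFDerivAt (fun P'' : M => H Q P'')
        (innerSL ℝ (L (G (m Q P)) Q)) P ∧
      HasFDerivAt (fun Q'' : M => H Q'' P)
        ((innerSL ℝ P).comp (fderiv ℝ (fun Q'' : M => L (G (m Q P)) Q'') Q)) Q := by
  classical
  intro Q P
  set b := stdOrthonormalBasis ℝ V with hb
  -- expansion of the momentum in an orthonormal basis
  have hmx : ∀ (Q' P' : M), m Q' P' = ∑ i, ⟪P', L (b i) Q'⟫ • b i := by
    intro Q' P'
    conv_lhs => rw [← b.sum_repr (m Q' P')]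
    refine Finset.sum_congr rfl fun i _ => ?_
    rw [b.repr_apply_apply, real_inner_comm, hm]
  -- the function F and its derivative
  set F : V → ℝ := fun μ => ⟪μ, G μ⟫ - l (G μ) with hFdef
  have hGdiff : ∀ x : V, HasFDerivAt G (fderiv ℝ G x) x :=
    fun x => (hG.differentiable one_ne_zero x).hasFDerivAt
  have hFderiv : ∀ μ0 : V, HasFDerivAt F (innerSL ℝ (G μ0)) μ0 := by
    intro μ0
    have h1 := (hasFDerivAt_id μ0).inner ℝ (hGdiff μ0)
    have hlg : HasFDerivAt l ((InnerProductSpace.toDual ℝ V) (μ0)) (G μ0) := by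
      have := ((hl.differentiable one_ne_zero (G μ0)).hasGradientAt).hasFDerivAt
      rwa [hGrad] at this
    have h2 := hlg.comp μ0 (hGdiff μ0)
    have h3 := h1.fun_sub h2
    refine h3.congr_fderiv ?_
    ext t
    simp only [ContinuousLinearMap.coe_comp', Function.comp_apply,
      ContinuousLinearMap.coe_sub', Pi.sub_apply, fderivInnerCLM_apply,
      ContinuousLinearMap.prod_apply, ContinuousLinearMap.coe_id', id_eq,
      InnerProductSpace.toDual_apply_apply, innerSL_apply_apply]
    rw [real_inner_comm (G μ0) t]
    ring
  -- H Q' P' = F (m Q' P')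
  have hHF : ∀ Q' P' : M, H Q' P' = F (m Q' P') := by
    intro Q' P'
    rw [hH, hFdef]
    simp only
    rw [hm Q' P' (G (m Q' P'))]
  set μ := m Q P with hμ
  constructor
  · -- P-derivative
    set N : M →L[ℝ] V := ∑ i, (innerSL ℝ (L (b i) Q)).smulRight (b i) with hN
    have hNapp : ∀ P' : M, N P' = m Q P' := by
      intro P'
      rw [hmx Q P', hN]
      simp only [ContinuousLinearMap.sum_apply, ContinuousLinearMap.smulRight_apply,
        innerSL_apply_apply]
      exact Finset.sum_congr rfl fun i _ => by rw [real_inner_comm]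
    have hcomp : HasFDerivAt (fun P'' : M => F (N P''))
        ((innerSL ℝ (G (N P))).comp N) P :=
      (hFderiv (N P)).comp P N.hasFDerivAt
    have hfun : (fun P'' : M => H Q P'') = fun P'' : M => F (N P'') := by
      funext P''
      rw [hHF Q P'', hNapp]
    rw [hfun]
    have heq : ((innerSL ℝ (G (N P))).comp N) = innerSL ℝ (L (G (m Q P)) Q) := by
      ext δP
      simp only [ContinuousLinearMap.coe_comp', Function.comp_apply, innerSL_apply_apply]
      rw [hNapp P, hNapp δP, real_inner_comm δP (L (G (m Q P)) Q),
        ← hm Q δP (G (m Q P))]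
      exact real_inner_comm _ _
    rwa [heq] at hcomp
  · -- Q-derivative
    have hLdiff : ∀ (w : V) (Q0 : M), DifferentiableAt ℝ (fun Q'' : M => L w Q'') Q0 := by
      intro w Q0
      have h1 : DifferentiableAt ℝ (fun p : V × M => L p.1 p.2) (w, Q0) :=
        hLsmooth.differentiable one_ne_zero _
      have h2 : DifferentiableAt ℝ (fun Q'' : M => ((w, Q'') : V × M)) Q0 :=
        (differentiableAt_const w).prodMk differentiableAt_id
      exact h1.comp Q0 h2
    set D : (Fin (Module.finrank ℝ V)) → (M →L[ℝ] M) :=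
      fun i => fderiv ℝ (fun Q'' : M => L (b i) Q'') Q with hD
    have hDi : ∀ i, HasFDerivAt (fun Q'' : M => L (b i) Q'') (D i) Q :=
      fun i => (hLdiff (b i) Q).hasFDerivAt
    set ξ := G (m Q P) with hξ
    -- derivative of Q'' ↦ L ξ Q''
    have hLξeq : (fun Q'' : M => L ξ Q'') = fun Q'' : M => ∑ i, ⟪b i, ξ⟫ • L (b i) Q'' := by
      funext Q''
      calc L ξ Q'' = (IsLinearMap.mk' _ (hLlin Q'')) ξ := rfl
        _ = ∑ i, ⟪b i, ξ⟫ • L (b i) Q'' := by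
            conv_lhs => rw [← b.sum_repr' ξ]
            rw [map_sum]
            exact Finset.sum_congr rfl fun i _ => by rw [map_smul]; rfl
    have hDξ : HasFDerivAt (fun Q'' : M => L ξ Q'') (∑ i, ⟪b i, ξ⟫ • D i) Q := by
      rw [hLξeq]
      exact HasFDerivAt.fun_sum fun i _ => (hDi i).const_smul _
    have hfd : fderiv ℝ (fun Q'' : M => L ξ Q'') Q = ∑ i, ⟪b i, ξ⟫ • D i := hDξ.fderiv
    -- derivative of Q'' ↦ m Q'' P
    set Dg : M →L[ℝ] V := ∑ i, (((innerSL ℝ P).comp (D i)).smulRight (b i)) with hDg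
    have hg : HasFDerivAt (fun Q'' : M => ∑ i, ⟪P, L (b i) Q''⟫ • b i) Dg Q := by
      rw [hDg]
      refine HasFDerivAt.fun_sum fun i _ => ?_
      have h1 : HasFDerivAt (fun Q'' : M => ⟪P, L (b i) Q''⟫)
          ((innerSL ℝ P).comp (D i)) Q :=
        ((innerSL ℝ P).hasFDerivAt).comp Q (hDi i)
      exact h1.smul_const (b i)
    have hfun : (fun Q'' : M => H Q'' P)
        = fun Q'' : M => F (∑ i, ⟪P, L (b i) Q''⟫ • b i) := by
      funext Q''
      rw [hHF Q'' P, hmx Q'' P]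
    rw [hfun]
    have hcomp : HasFDerivAt (fun Q'' : M => F (∑ i, ⟪P, L (b i) Q''⟫ • b i))
        ((innerSL ℝ (G (∑ i, ⟪P, L (b i) Q⟫ • b i))).comp Dg) Q :=
      (hFderiv _).comp Q hg
    have heq : ((innerSL ℝ (G (∑ i, ⟪P, L (b i) Q⟫ • b i))).comp Dg)
        = (innerSL ℝ P).comp (fderiv ℝ (fun Q'' : M => L (G (m Q P)) Q'') Q) := by
      rw [← hξ, hfd, ← hmx Q P, ← hξ]
      ext δQ
      simp only [ContinuousLinearMap.coe_comp', Function.comp_apply, innerSL_apply_apply,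
        hDg, ContinuousLinearMap.sum_apply, ContinuousLinearMap.smulRight_apply,
        ContinuousLinearMap.coe_smul', Pi.smul_apply, inner_sum, real_inner_smul_right]
      exact Finset.sum_congr rfl fun i _ => by rw [real_inner_comm ξ (b i)]; ring
    rwa [heq] at hcomp
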